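/- Let α ∈ (0,1) and β < 1+α. Then for every k ∈ ℕ there exists a constant C′_k > 0, depending only on α, β and k, such that for all real s ≥ 1: |∫₀^∞ ω^k e^{−sω} ψ_{α,β}(ω) dω| ≤ C′_k s^{−k−α+β−1} if α ≠ β, and |∫₀^∞ ω^k e^{−sω} ψ_{α,α}(ω) dω| ≤ C′_k s^{−k−2α+α−1} = C′_k s^{−k−α−1} if α = β. -/

import Mathlib

open MeasureTheory

/-- The function ψ_{α,β}(ω) = (ω^{2α−β} sin(πβ) − ω^{α−β} sin(π(β−α)))
/ (ω^{2α} + 2ω^α cos(πα) + 1) for ω > 0. -/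
noncomputable def psiml (α β : ℝ) (ω : ℝ) : ℝ :=
  (ω ^ (2 * α - β) * Real.sin (Real.pi * β) -
      ω ^ (α - β) * Real.sin (Real.pi * (β - α))) /
    (ω ^ (2 * α) + 2 * ω ^ α * Real.cos (Real.pi * α) + 1)

/-- Value and integrability of the basic Laplace-type integral. -/
lemma psiml_aux_int (k : ℕ) (p s : ℝ) (hp : 0 < (k:ℝ) + p + 1) (hs : 0 < s) :
    IntegrableOn (fun ω : ℝ => ω ^ k * Real.exp (-s*ω) * ω ^ p) (Set.Ioi 0) ∧
    ∫ ω in Set.Ioi (0:ℝ), ω ^ k * Real.exp (-s*ω) * ω ^ p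
      = (1/s) ^ ((k:ℝ)+p+1) * Real.Gamma ((k:ℝ)+p+1) := by
  have hcong : ∀ ω ∈ Set.Ioi (0:ℝ),
      ω ^ (((k:ℝ)+p+1) - 1) * Real.exp (-(s*ω)) = ω ^ k * Real.exp (-s*ω) * ω ^ p := by
    intro ω hω
    rw [show ((k:ℝ)+p+1) - 1 = (k:ℝ) + p by ring, Real.rpow_add hω,
      Real.rpow_natCast, neg_mul]
    ring
  constructor
  · have h := integrableOn_rpow_mul_exp_neg_mul_rpow
      (p := 1) (s := (k:ℝ)+p) (b := s) (by linarith) one_pos hs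
    refine (h.congr_fun (fun ω hω => ?_) measurableSet_Ioi)
    dsimp only
    rw [Real.rpow_one, Real.rpow_add hω, Real.rpow_natCast, neg_mul]
    ring
  · rw [← setIntegral_congr_fun measurableSet_Ioi hcong,
      Real.integral_rpow_mul_exp_neg_mul_Ioi hp hs]

/-- Lower bound for the denominator of ψ. -/
lemma psiml_denom_ge (α : ℝ) {ω : ℝ} (hω : 0 < ω) :
    Real.sin (Real.pi * α) ^ 2 ≤ ω ^ (2*α) + 2 * ω ^ α * Real.cos (Real.pi * α) + 1 := by
  have hx : ω ^ (2*α) = (ω ^ α) ^ 2 := by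
    rw [show (2:ℝ)*α = α*2 by ring, Real.rpow_mul hω.le, Real.rpow_two]
  nlinarith [Real.sin_sq_add_cos_sq (Real.pi * α), sq_nonneg (ω ^ α + Real.cos (Real.pi * α))]

theorem psiml_laplace_deriv_bound_large_s
    (α β : ℝ) (hα : α ∈ Set.Ioo (0 : ℝ) 1) (hβ : β < 1 + α) (k : ℕ) :
    ∃ C > (0 : ℝ), ∀ s : ℝ, 1 ≤ s →
      (α ≠ β →
        |∫ ω in Set.Ioi (0 : ℝ), ω ^ k * Real.exp (-s * ω) * psiml α β ω| ≤
          C * s ^ (-(k : ℝ) - α + β - 1)) ∧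
      (α = β →
        |∫ ω in Set.Ioi (0 : ℝ), ω ^ k * Real.exp (-s * ω) * psiml α α ω| ≤
          C * s ^ (-(k : ℝ) - α - 1)) := by
  obtain ⟨hα0, hα1⟩ := hα
  set c := Real.sin (Real.pi * α) with hcdef
  have hc : 0 < c := Real.sin_pos_of_pos_of_lt_pi (by positivity)
    (by nlinarith [Real.pi_pos])
  -- positivity of the relevant exponents
  have he1 : 0 < (k:ℝ) + (α - β) + 1 := by linarith
  have he2 : 0 < (k:ℝ) + (2*α - β) + 1 := by linarith
  have he3 : 0 < (k:ℝ) + α + 1 := by positivity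
  have hΓ1 := Real.Gamma_pos_of_pos he1
  have hΓ2 := Real.Gamma_pos_of_pos he2
  have hΓ3 := Real.Gamma_pos_of_pos he3
  -- denominator bounds
  have hden : ∀ ω : ℝ, 0 < ω →
      c ^ 2 ≤ ω ^ (2*α) + 2 * ω ^ α * Real.cos (Real.pi * α) + 1 :=
    fun ω hω => psiml_denom_ge α hω
  have hdenpos : ∀ ω : ℝ, 0 < ω →
      0 < ω ^ (2*α) + 2 * ω ^ α * Real.cos (Real.pi * α) + 1 :=
    fun ω hω => lt_of_lt_of_le (by positivity) (hden ω hω)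
  -- pointwise bound on ψ
  have hpsi : ∀ ω : ℝ, 0 < ω →
      |psiml α β ω| ≤ (ω ^ (2*α - β) + ω ^ (α - β)) / c ^ 2 := by
    intro ω hω
    have h1 : 0 ≤ ω ^ (2*α - β) := Real.rpow_nonneg hω.le _
    have h2 : 0 ≤ ω ^ (α - β) := Real.rpow_nonneg hω.le _
    rw [psiml, abs_div, abs_of_pos (hdenpos ω hω)]
    refine div_le_div₀ (by positivity) ?_ (by positivity) (hden ω hω)
    calc |ω ^ (2*α - β) * Real.sin (Real.pi * β) - ω ^ (α - β) * Real.sin (Real.pi * (β - α))|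
        ≤ |ω ^ (2*α - β) * Real.sin (Real.pi * β)| +
            |ω ^ (α - β) * Real.sin (Real.pi * (β - α))| := abs_sub _ _
      _ ≤ ω ^ (2*α - β) * 1 + ω ^ (α - β) * 1 := by
          rw [abs_mul, abs_mul, abs_of_nonneg h1, abs_of_nonneg h2]
          gcongr <;> exact Real.abs_sin_le_one _
      _ = ω ^ (2*α - β) + ω ^ (α - β) := by ring
  -- pointwise bound on ψ for α = β
  have hpsia : ∀ ω : ℝ, 0 < ω → |psiml α α ω| ≤ ω ^ α / c := by
    intro ω hω
    have hval : psiml α α ω = ω ^ α * c / (ω ^ (2*α) + 2 * ω ^ α * Real.cos (Real.pi * α) + 1) := by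
      rw [psiml, show (2*α - α) = α by ring, sub_self, mul_zero, Real.sin_zero, mul_zero, sub_zero]
    have h1 : 0 ≤ ω ^ α := Real.rpow_nonneg hω.le _
    rw [hval, abs_div, abs_of_pos (hdenpos ω hω), abs_of_nonneg (by positivity)]
    calc ω ^ α * c / (ω ^ (2*α) + 2 * ω ^ α * Real.cos (Real.pi * α) + 1)
        ≤ ω ^ α * c / c ^ 2 := div_le_div₀ (by positivity) le_rfl (by positivity) (hden ω hω)
      _ = ω ^ α / c := by field_simp
  -- measurability of ψ
  have hmeas : ∀ γ : ℝ, Measurable (psiml α γ) := by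
    intro γ; unfold psiml; fun_prop
  -- the common constant
  refine ⟨Real.Gamma ((k:ℝ)+(2*α-β)+1) / c ^ 2 + Real.Gamma ((k:ℝ)+(α-β)+1) / c ^ 2
      + Real.Gamma ((k:ℝ)+α+1) / c, by positivity, ?_⟩
  intro s hs
  have hs0 : 0 < s := lt_of_lt_of_le one_pos hs
  have hinv : (1:ℝ)/s = s⁻¹ := one_div s
  -- a generic bounding step
  have main : ∀ γ : ℝ, (∀ ω : ℝ, 0 < ω → |psiml α γ ω| ≤ (ω ^ (2*α - β) + ω ^ (α - β)) / c ^ 2) →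
      |∫ ω in Set.Ioi (0 : ℝ), ω ^ k * Real.exp (-s * ω) * psiml α γ ω| ≤
        (Real.Gamma ((k:ℝ)+(2*α-β)+1) / c ^ 2) * s ^ (-((k:ℝ)+(2*α-β)+1)) +
        (Real.Gamma ((k:ℝ)+(α-β)+1) / c ^ 2) * s ^ (-((k:ℝ)+(α-β)+1)) := by
    intro γ hb
    obtain ⟨hint2, hval2⟩ := psiml_aux_int k (2*α - β) s he2 hs0
    obtain ⟨hint1, hval1⟩ := psiml_aux_int k (α - β) s he1 hs0
    set G : ℝ → ℝ := fun ω => (ω ^ k * Real.exp (-s*ω) * ω ^ (2*α - β)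
        + ω ^ k * Real.exp (-s*ω) * ω ^ (α - β)) * (c ^ 2)⁻¹ with hG
    have hGint : IntegrableOn G (Set.Ioi 0) := (hint2.add hint1).mul_const _
    have hfm : AEStronglyMeasurable (fun ω : ℝ => ω ^ k * Real.exp (-s * ω) * psiml α γ ω)
        (volume.restrict (Set.Ioi 0)) := by
      exact (((measurable_id.pow_const k).mul (by fun_prop)).mul (hmeas γ)).aestronglyMeasurable
    have hbd : ∀ ω ∈ Set.Ioi (0:ℝ), ‖ω ^ k * Real.exp (-s * ω) * psiml α γ ω‖ ≤ G ω := by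
      intro ω hω
      have hω0 : 0 < ω := hω
      have hkpos : (0:ℝ) ≤ ω ^ k * Real.exp (-s*ω) := by positivity
      rw [Real.norm_eq_abs, abs_mul, abs_of_nonneg hkpos]
      calc ω ^ k * Real.exp (-s*ω) * |psiml α γ ω|
          ≤ ω ^ k * Real.exp (-s*ω) * ((ω ^ (2*α - β) + ω ^ (α - β)) / c ^ 2) :=
            mul_le_mul_of_nonneg_left (hb ω hω0) hkpos
        _ = G ω := by rw [hG]; field_simp
    have hfint : IntegrableOn (fun ω : ℝ => ω ^ k * Real.exp (-s * ω) * psiml α γ ω)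
        (Set.Ioi 0) := by
      refine hGint.mono' hfm ?_
      filter_upwards [ae_restrict_mem measurableSet_Ioi] with ω hω using hbd ω hω
    calc |∫ ω in Set.Ioi (0 : ℝ), ω ^ k * Real.exp (-s * ω) * psiml α γ ω|
        ≤ ∫ ω in Set.Ioi (0 : ℝ), ‖ω ^ k * Real.exp (-s * ω) * psiml α γ ω‖ := by
          rw [← Real.norm_eq_abs]; exact norm_integral_le_integral_norm _
      _ ≤ ∫ ω in Set.Ioi (0 : ℝ), G ω := by
          refine setIntegral_mono_on hfint.norm hGint measurableSet_Ioi hbd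
      _ = (∫ ω in Set.Ioi (0 : ℝ), (ω ^ k * Real.exp (-s*ω) * ω ^ (2*α - β)
            + ω ^ k * Real.exp (-s*ω) * ω ^ (α - β))) * (c ^ 2)⁻¹ := by
          rw [hG, integral_mul_const]
      _ = ((1/s) ^ ((k:ℝ)+(2*α-β)+1) * Real.Gamma ((k:ℝ)+(2*α-β)+1)
            + (1/s) ^ ((k:ℝ)+(α-β)+1) * Real.Gamma ((k:ℝ)+(α-β)+1)) * (c ^ 2)⁻¹ := by
          rw [integral_add hint2 hint1, hval2, hval1]
      _ = (Real.Gamma ((k:ℝ)+(2*α-β)+1) / c ^ 2) * s ^ (-((k:ℝ)+(2*α-β)+1)) +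
          (Real.Gamma ((k:ℝ)+(α-β)+1) / c ^ 2) * s ^ (-((k:ℝ)+(α-β)+1)) := by
          rw [hinv, Real.inv_rpow hs0.le, Real.inv_rpow hs0.le,
            ← Real.rpow_neg hs0.le, ← Real.rpow_neg hs0.le]
          ring
  constructor
  · intro _
    have h := main β hpsi
    have hle : s ^ (-((k:ℝ)+(2*α-β)+1)) ≤ s ^ (-((k:ℝ)+(α-β)+1)) :=
      Real.rpow_le_rpow_of_exponent_le hs (by linarith)
    have heq : -(k:ℝ) - α + β - 1 = -((k:ℝ)+(α-β)+1) := by ring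
    rw [heq]
    have hpos : 0 ≤ s ^ (-((k:ℝ)+(α-β)+1)) := Real.rpow_nonneg hs0.le _
    calc |∫ ω in Set.Ioi (0 : ℝ), ω ^ k * Real.exp (-s * ω) * psiml α β ω|
        ≤ (Real.Gamma ((k:ℝ)+(2*α-β)+1) / c ^ 2) * s ^ (-((k:ℝ)+(2*α-β)+1)) +
          (Real.Gamma ((k:ℝ)+(α-β)+1) / c ^ 2) * s ^ (-((k:ℝ)+(α-β)+1)) := h
      _ ≤ (Real.Gamma ((k:ℝ)+(2*α-β)+1) / c ^ 2 + Real.Gamma ((k:ℝ)+(α-β)+1) / c ^ 2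
            + Real.Gamma ((k:ℝ)+α+1) / c) * s ^ (-((k:ℝ)+(α-β)+1)) := by
          have h1 : (Real.Gamma ((k:ℝ)+(2*α-β)+1) / c ^ 2) * s ^ (-((k:ℝ)+(2*α-β)+1)) ≤
              (Real.Gamma ((k:ℝ)+(2*α-β)+1) / c ^ 2) * s ^ (-((k:ℝ)+(α-β)+1)) :=
            mul_le_mul_of_nonneg_left hle (by positivity)
          have h3 : 0 ≤ (Real.Gamma ((k:ℝ)+α+1) / c) * s ^ (-((k:ℝ)+(α-β)+1)) := by positivity
          nlinarith
  · intro _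
    -- redo the bound with the single-term estimate
    obtain ⟨hint3, hval3⟩ := psiml_aux_int k α s he3 hs0
    set G : ℝ → ℝ := fun ω => (ω ^ k * Real.exp (-s*ω) * ω ^ α) * c⁻¹ with hG
    have hGint : IntegrableOn G (Set.Ioi 0) := hint3.mul_const _
    have hfm : AEStronglyMeasurable (fun ω : ℝ => ω ^ k * Real.exp (-s * ω) * psiml α α ω)
        (volume.restrict (Set.Ioi 0)) := by
      exact (((measurable_id.pow_const k).mul (by fun_prop)).mul (hmeas α)).aestronglyMeasurable
    have hbd : ∀ ω ∈ Set.Ioi (0:ℝ), ‖ω ^ k * Real.exp (-s * ω) * psiml α α ω‖ ≤ G ω := by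
      intro ω hω
      have hω0 : 0 < ω := hω
      have hkpos : (0:ℝ) ≤ ω ^ k * Real.exp (-s*ω) := by positivity
      rw [Real.norm_eq_abs, abs_mul, abs_of_nonneg hkpos]
      calc ω ^ k * Real.exp (-s*ω) * |psiml α α ω|
          ≤ ω ^ k * Real.exp (-s*ω) * (ω ^ α / c) :=
            mul_le_mul_of_nonneg_left (hpsia ω hω0) hkpos
        _ = G ω := by rw [hG]; field_simp
    have hfint : IntegrableOn (fun ω : ℝ => ω ^ k * Real.exp (-s * ω) * psiml α α ω)
        (Set.Ioi 0) := by
      refine hGint.mono' hfm ?_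
      filter_upwards [ae_restrict_mem measurableSet_Ioi] with ω hω using hbd ω hω
    have heq : -(k:ℝ) - α - 1 = -((k:ℝ)+α+1) := by ring
    rw [heq]
    calc |∫ ω in Set.Ioi (0 : ℝ), ω ^ k * Real.exp (-s * ω) * psiml α α ω|
        ≤ ∫ ω in Set.Ioi (0 : ℝ), ‖ω ^ k * Real.exp (-s * ω) * psiml α α ω‖ := by
          rw [← Real.norm_eq_abs]; exact norm_integral_le_integral_norm _
      _ ≤ ∫ ω in Set.Ioi (0 : ℝ), G ω :=
          setIntegral_mono_on hfint.norm hGint measurableSet_Ioi hbd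
      _ = ((1/s) ^ ((k:ℝ)+α+1) * Real.Gamma ((k:ℝ)+α+1)) * c⁻¹ := by
          rw [hG, integral_mul_const, hval3]
      _ = (Real.Gamma ((k:ℝ)+α+1) / c) * s ^ (-((k:ℝ)+α+1)) := by
          rw [hinv, Real.inv_rpow hs0.le, ← Real.rpow_neg hs0.le]; ring
      _ ≤ (Real.Gamma ((k:ℝ)+(2*α-β)+1) / c ^ 2 + Real.Gamma ((k:ℝ)+(α-β)+1) / c ^ 2
            + Real.Gamma ((k:ℝ)+α+1) / c) * s ^ (-((k:ℝ)+α+1)) := by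
          have hX : 0 ≤ s ^ (-((k:ℝ)+α+1)) := Real.rpow_nonneg hs0.le _
          have h1 : 0 ≤ (Real.Gamma ((k:ℝ)+(2*α-β)+1) / c ^ 2) * s ^ (-((k:ℝ)+α+1)) := by
            positivity
          have h2 : 0 ≤ (Real.Gamma ((k:ℝ)+(α-β)+1) / c ^ 2) * s ^ (-((k:ℝ)+α+1)) := by
            positivity
          nlinarith
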